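/- Let T be a spanning tree minimizing cost c : E → ℝ, and suppose there are distinct indices j₁,...,j_κ and distinct edges e_{j_1},...,e_{j_κ} ∉ T, f_{j_1},...,f_{j_κ} ∈ T with f_{j_i} ∈ P_T(e_{j_i}) and f_{j_i} ∈ P_T(e_{j_{i+1}}) (cyclically), and c(e_{j_i}) = c(f_{j_i}) for all i. Then all 2κ edges e_{j_1},...,e_{j_κ}, f_{j_1},...,f_{j_κ} have the same cost c. -/

import Mathlib

open Finset

/-- `T` is (the edge set of) a spanning tree of `G`: its edges are edges of `G`
and the graph formed by these edges is a tree (connected and acyclic, spanning all vertices). -/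
def IsSpanningTree {V : Type*} (G : SimpleGraph V) (T : Finset (Sym2 V)) : Prop :=
  (T : Set (Sym2 V)) ⊆ G.edgeSet ∧ (SimpleGraph.fromEdgeSet (T : Set (Sym2 V))).IsTree

/-- `f` lies on the unique path in the tree `T` joining the endpoints of `e`:
equivalently, `f ∈ T` and removing `f` disconnects the endpoints of `e` in `T`. -/
def OnTreePath {V : Type*} (T : Finset (Sym2 V)) (e f : Sym2 V) : Prop :=
  f ∈ T ∧ ∀ u v : V, e = s(u, v) →
    ¬ (SimpleGraph.fromEdgeSet ((T : Set (Sym2 V)) \ {f})).Reachable u v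

/-- Path optimality conditions for a spanning tree `T` of `G` with edge costs `w`. -/
def PathOpt {V : Type*} (G : SimpleGraph V) (T : Finset (Sym2 V)) (w : Sym2 V → ℝ) : Prop :=
  ∀ u v : V, s(u, v) ∈ G.edgeSet → s(u, v) ∉ T →
    ∀ f, OnTreePath T s(u, v) f → w f ≤ w (s(u, v))

/-- The sufficient pair optimality conditions of Theorem 2, with explicit witnesses `α`, `β`. -/
def SuffPairOpt {V : Type*} [Fintype V] [DecidableEq V] (G : SimpleGraph V)
    (C c : Sym2 V → ℝ) (θ : ℝ) (X Y : Finset (Sym2 V)) (α β : Sym2 V → ℝ) : Prop :=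
  (∀ e, 0 ≤ α e) ∧ (∀ e, 0 ≤ β e) ∧ (∀ e ∈ G.edgeSet, α e + β e = θ) ∧
  (∀ T, IsSpanningTree G T → ∑ e ∈ X, (C e - α e) ≤ ∑ e ∈ T, (C e - α e)) ∧
  (∀ T, IsSpanningTree G T → ∑ e ∈ Y, (c e - β e) ≤ ∑ e ∈ T, (c e - β e)) ∧
  (∀ e ∈ X \ Y, α e = 0) ∧ (∀ e ∈ Y \ X, β e = 0)

/-- Arcs of the admissible graph for the pair `(X,Y)` with reduced costs `Cs`, `cs`:
an `X`-arc `(a,b)` with `a ∉ X`, `b ∈ P_X(a)`, `Cs a = Cs b`, or a `Y`-arc `(a,b)`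
(i.e. `(v_f,v_e)` with `f = a`, `e = b`) with `b ∉ Y`, `a ∈ P_Y(b)`, `cs b = cs a`. -/
def AdmArc {V : Type*} [Fintype V] [DecidableEq V] (X Y : Finset (Sym2 V))
    (Cs cs : Sym2 V → ℝ) (a b : Sym2 V) : Prop :=
  (a ∉ X ∧ OnTreePath X a b ∧ Cs a = Cs b) ∨ (b ∉ Y ∧ OnTreePath Y b a ∧ cs b = cs a)

/-- A node of the admissible graph is admissible if it is reachable (by a directed path)
from some node `v_g` with `g ∈ Y \ X`. -/
def AdmNode {V : Type*} [Fintype V] [DecidableEq V] (X Y : Finset (Sym2 V))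
    (Cs cs : Sym2 V → ℝ) (h : Sym2 V) : Prop :=
  ∃ g, g ∈ Y ∧ g ∉ X ∧ Relation.ReflTransGen (AdmArc X Y Cs cs) g h

open SimpleGraph in
/-- Decomposing reachability after adding one edge to an edge set. -/
lemma reach_union_edge {V : Type*} (S : Set (Sym2 V)) (u v x y : V)
    (h : (fromEdgeSet (S ∪ {s(u, v)})).Reachable x y) :
    (fromEdgeSet S).Reachable x y ∨
      ((fromEdgeSet S).Reachable x u ∧ (fromEdgeSet S).Reachable v y) ∨
      ((fromEdgeSet S).Reachable x v ∧ (fromEdgeSet S).Reachable u y) := by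
  rw [SimpleGraph.reachable_iff_reflTransGen] at h
  induction h with
  | refl => exact Or.inl (Reachable.refl x)
  | @tail b z hxb hbz ih =>
    rw [fromEdgeSet_adj] at hbz
    obtain ⟨hmem, hne⟩ := hbz
    rcases hmem with hmem | hmem
    · have hadj : (fromEdgeSet S).Adj b z := (fromEdgeSet_adj _).mpr ⟨hmem, hne⟩
      rcases ih with h1 | ⟨h1, h2⟩ | ⟨h1, h2⟩
      · exact Or.inl (h1.trans hadj.reachable)
      · exact Or.inr (Or.inl ⟨h1, h2.trans hadj.reachable⟩)
      · exact Or.inr (Or.inr ⟨h1, h2.trans hadj.reachable⟩)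
    · rw [Set.mem_singleton_iff, Sym2.eq_iff] at hmem
      rcases hmem with ⟨rfl, rfl⟩ | ⟨rfl, rfl⟩
      · rcases ih with h1 | ⟨h1, h2⟩ | ⟨h1, h2⟩
        · exact Or.inr (Or.inl ⟨h1, Reachable.refl _⟩)
        · exact Or.inr (Or.inl ⟨h1, Reachable.refl _⟩)
        · exact Or.inl h1
      · rcases ih with h1 | ⟨h1, h2⟩ | ⟨h1, h2⟩
        · exact Or.inr (Or.inr ⟨h1, Reachable.refl _⟩)
        · exact Or.inl h1
        · exact Or.inr (Or.inr ⟨h1, Reachable.refl _⟩)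

open SimpleGraph in
/-- Removing one edge from a connected edge set leaves at most two components. -/
lemma two_comp {V : Type*} (S : Set (Sym2 V)) (p q x : V)
    (hpq : s(p, q) ∈ S) (hx : (fromEdgeSet S).Reachable x p) :
    (fromEdgeSet (S \ {s(p, q)})).Reachable x p ∨
      (fromEdgeSet (S \ {s(p, q)})).Reachable x q := by
  have hS : (S \ {s(p, q)}) ∪ {s(p, q)} = S := by
    rw [Set.diff_union_of_subset (Set.singleton_subset_iff.mpr hpq)]
  rw [← hS] at hx
  rcases reach_union_edge _ p q x p hx with h | ⟨h1, _⟩ | ⟨h1, _⟩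
  · exact Or.inl h
  · exact Or.inl h1
  · exact Or.inr h1

open SimpleGraph in
/-- Exchange step: replacing `s(p,q)` by `s(u,v)` in a spanning tree, assuming
`u` lies in the component of `p` and `v` in that of `q`. -/
lemma exchange_core {V : Type*} [Fintype V] [DecidableEq V] (G : SimpleGraph V)
    (T : Finset (Sym2 V)) (hT : IsSpanningTree G T) (u v p q : V)
    (huv : s(u, v) ∈ G.edgeSet) (heT : s(u, v) ∉ T) (hfT : s(p, q) ∈ T)
    (hnr : ¬ (fromEdgeSet ((T : Set (Sym2 V)) \ {s(p, q)})).Reachable u v)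
    (hup : (fromEdgeSet ((T : Set (Sym2 V)) \ {s(p, q)})).Reachable u p)
    (hvq : (fromEdgeSet ((T : Set (Sym2 V)) \ {s(p, q)})).Reachable v q) :
    IsSpanningTree G (insert s(u, v) (T.erase s(p, q))) := by
  set H : SimpleGraph V := fromEdgeSet ((T : Set (Sym2 V)) \ {s(p, q)}) with hHdef
  have hsub : (T : Set (Sym2 V)) ⊆ G.edgeSet := hT.1
  have huvne : u ≠ v := G.ne_of_adj ((SimpleGraph.mem_edgeSet G).mp huv)
  have hset : ((insert s(u, v) (T.erase s(p, q)) : Finset (Sym2 V)) : Set (Sym2 V)) =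
      ((T : Set (Sym2 V)) \ {s(p, q)}) ∪ {s(u, v)} := by
    rw [Finset.coe_insert, Finset.coe_erase, Set.insert_eq, Set.union_comm]
  set H' : SimpleGraph V :=
    fromEdgeSet ((insert s(u, v) (T.erase s(p, q)) : Finset (Sym2 V)) : Set (Sym2 V)) with hH'def
  have hH' : H' = fromEdgeSet (((T : Set (Sym2 V)) \ {s(p, q)}) ∪ {s(u, v)}) := by
    rw [hH'def, hset]
  have hle : H ≤ H' := by
    rw [hH', hHdef]; exact SimpleGraph.fromEdgeSet_mono Set.subset_union_left
  have hadjuv : H'.Adj u v := by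
    rw [hH', fromEdgeSet_adj]
    exact ⟨Or.inr rfl, huvne⟩
  have hpq' : H'.Reachable p q :=
    ((hup.symm.mono hle).trans hadjuv.reachable).trans (hvq.mono hle)
  constructor
  · rw [hset]
    exact Set.union_subset (Set.diff_subset.trans hsub) (Set.singleton_subset_iff.mpr huv)
  constructor
  · -- connected
    rw [SimpleGraph.connected_iff]
    refine ⟨?_, hT.2.isConnected.nonempty⟩
    have hcomp : ∀ x : V, H'.Reachable x p := by
      intro x
      have hxp : (fromEdgeSet (T : Set (Sym2 V))).Reachable x p :=
        hT.2.isConnected.preconnected x p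
      rcases two_comp _ p q x hfT hxp with h | h
      · exact h.mono hle
      · exact (h.mono hle).trans hpq'.symm
    intro x y
    exact (hcomp x).trans (hcomp y).symm
  · -- acyclic
    rw [SimpleGraph.isAcyclic_iff_forall_adj_isBridge]
    intro a b hab
    rw [SimpleGraph.isBridge_iff]
    unfold SimpleGraph.deleteEdges
    have hab' := hab
    rw [hset, fromEdgeSet_adj] at hab'
    obtain ⟨hmem, hne⟩ := hab'
    rw [← SimpleGraph.fromEdgeSet_sdiff, hset]
    rcases hmem with hmem | hmem
    · -- a genuine tree edge, distinct from s(p,q)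
      intro hr
      have huvab : s(u, v) ≠ s(a, b) := fun h => heT (h ▸ hmem.1)
      have hseteq : (((T : Set (Sym2 V)) \ {s(p, q)}) ∪ {s(u, v)}) \ {s(a, b)} =
          (((T : Set (Sym2 V)) \ {s(p, q)}) \ {s(a, b)}) ∪ {s(u, v)} := by
        ext z
        simp only [Set.mem_diff, Set.mem_union, Set.mem_singleton_iff]
        constructor
        · rintro ⟨hz | hz, hz2⟩
          · exact Or.inl ⟨hz, hz2⟩
          · exact Or.inr hz
        · rintro (⟨hz1, hz2⟩ | hz)
          · exact ⟨Or.inl hz1, hz2⟩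
          · exact ⟨Or.inr hz, fun h => huvab (hz.symm.trans h)⟩
      rw [hseteq] at hr
      have hmono : fromEdgeSet ((((T : Set (Sym2 V)) \ {s(p, q)}) \ {s(a, b)})) ≤ H := by
        rw [hHdef]; exact SimpleGraph.fromEdgeSet_mono Set.diff_subset
      have hbridge : ¬ (fromEdgeSet ((T : Set (Sym2 V)) \ {s(a, b)})).Reachable a b := by
        have hadjT : (fromEdgeSet (T : Set (Sym2 V))).Adj a b :=
          (fromEdgeSet_adj _).mpr ⟨hmem.1, hne⟩
        have := (SimpleGraph.isAcyclic_iff_forall_adj_isBridge.mp hT.2.IsAcyclic) hadjT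
        rw [SimpleGraph.isBridge_iff] at this
        intro hcon
        exact this (by rwa [SimpleGraph.fromEdgeSet_sdiff] at hcon)
      have hadjH : H.Adj a b := by
        rw [hHdef, fromEdgeSet_adj]; exact ⟨hmem, hne⟩
      rcases reach_union_edge _ u v a b hr with h1 | ⟨h1, h2⟩ | ⟨h1, h2⟩
      · exact hbridge (h1.mono (SimpleGraph.fromEdgeSet_mono
          (fun z hz => ⟨hz.1.1, hz.2⟩)))
      · -- a ~ u, v ~ b in T \ {pq, ab}; then u ~ a ~ b ~ v in H
        exact hnr (((h1.mono hmono).symm.trans hadjH.reachable).trans (h2.mono hmono).symm)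
      · exact hnr (((h2.mono hmono).trans hadjH.reachable.symm).trans (h1.mono hmono))
    · -- the new edge s(u,v)
      rw [Set.mem_singleton_iff] at hmem
      have hseteq : (((T : Set (Sym2 V)) \ {s(p, q)}) ∪ {s(u, v)}) \ {s(a, b)} ⊆
          (T : Set (Sym2 V)) \ {s(p, q)} := by
        rintro z ⟨hz | hz, hz2⟩
        · exact hz
        · exact absurd (hz.trans hmem.symm) hz2
      intro hr
      have hr' : H.Reachable a b := hr.mono (SimpleGraph.fromEdgeSet_mono hseteq)
      rw [Sym2.eq_iff] at hmem
      rcases hmem with ⟨rfl, rfl⟩ | ⟨rfl, rfl⟩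
      · exact hnr hr'
      · exact hnr hr'.symm

open SimpleGraph in
/-- Path optimality from minimality of the spanning tree. -/
lemma mst_pathOpt {V : Type*} [Fintype V] [DecidableEq V] (G : SimpleGraph V)
    (T : Finset (Sym2 V)) (hT : IsSpanningTree G T) (c : Sym2 V → ℝ)
    (hTmin : ∀ T', IsSpanningTree G T' → ∑ x ∈ T, c x ≤ ∑ x ∈ T', c x) :
    ∀ a : Sym2 V, a ∈ G.edgeSet → a ∉ T → ∀ b, OnTreePath T a b → c b ≤ c a := by
  intro a
  induction a using Sym2.ind with
  | _ u v =>
    intro ha haT b hb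
    obtain ⟨hbT, hsep⟩ := hb
    have hnr := hsep u v rfl
    revert hbT hnr
    induction b using Sym2.ind with
    | _ p q =>
      intro hbT hnr
      -- components of u and v in T minus s(p,q)
      set H : SimpleGraph V := fromEdgeSet ((T : Set (Sym2 V)) \ {s(p, q)}) with hHdef
      have hcompu := two_comp (T : Set (Sym2 V)) p q u hbT (hT.2.isConnected.preconnected u p)
      have hcompv := two_comp (T : Set (Sym2 V)) p q v hbT (hT.2.isConnected.preconnected v p)
      have hT' : IsSpanningTree G (insert s(u, v) (T.erase s(p, q))) := by
        rcases hcompu with hup | huq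
        · rcases hcompv with hvp | hvq
          · exact absurd (hup.trans hvp.symm) hnr
          · exact exchange_core G T hT u v p q ha haT hbT hnr hup hvq
        · rcases hcompv with hvp | hvq
          · have hbT' : s(q, p) ∈ T := by rwa [Sym2.eq_swap]
            have h := exchange_core G T hT u v q p ha haT hbT'
              (by rwa [Sym2.eq_swap]) (by rwa [Sym2.eq_swap]) (by rwa [Sym2.eq_swap])
            rwa [Sym2.eq_swap (a := q) (b := p)] at h
          · exact absurd (huq.trans hvq.symm) hnr
      have hle := hTmin _ hT'
      have hne : s(u, v) ∉ T.erase s(p, q) := fun h => haT (Finset.mem_of_mem_erase h)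
      rw [Finset.sum_insert hne] at hle
      have herase : c s(p, q) + ∑ x ∈ T.erase s(p, q), c x = ∑ x ∈ T, c x :=
        Finset.add_sum_erase T c hbT
      linarith

/-- along an alternating cycle of tight exchanges in a minimum spanning tree,
all involved edges share the same cost. -/
theorem stmt7 {V : Type*} [Fintype V] [DecidableEq V] (G : SimpleGraph V)
    (hG : G.Connected) (T : Finset (Sym2 V)) (hT : IsSpanningTree G T)
    (c : Sym2 V → ℝ)
    (hTmin : ∀ T', IsSpanningTree G T' → ∑ e ∈ T, c e ≤ ∑ e ∈ T', c e)
    (κ : ℕ) (hκ : 1 ≤ κ) (e f : Fin κ → Sym2 V)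
    (hdist : ∀ i j : Fin κ, (e i = e j → i = j) ∧ (f i = f j → i = j) ∧ e i ≠ f j)
    (heG : ∀ i, e i ∈ G.edgeSet) (heT : ∀ i, e i ∉ T) (hfT : ∀ i, f i ∈ T)
    (hfP : ∀ i, OnTreePath T (e i) (f i))
    (hfP2 : ∀ i : Fin κ, OnTreePath T (e ⟨(i.1 + 1) % κ, Nat.mod_lt _ (by omega)⟩) (f i))
    (htight : ∀ i, c (e i) = c (f i)) :
    ∀ i j : Fin κ, c (e i) = c (e j) ∧ c (f i) = c (f j) ∧ c (e i) = c (f j) := by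
  intro i j
  set g : Fin κ → ℝ := fun i => c (e i) with hg
  have step' : ∀ n (hn : n < κ), g ⟨n, hn⟩ ≤ g ⟨(n + 1) % κ, Nat.mod_lt _ (by omega)⟩ := by
    intro n hn
    exact (htight ⟨n, hn⟩).trans_le
      (mst_pathOpt G T hT c hTmin _ (heG _) (heT _) _ (hfP2 ⟨n, hn⟩))
  have mono : ∀ m (hm : m < κ), ∀ n (hn : n < κ), n ≤ m → g ⟨n, hn⟩ ≤ g ⟨m, hm⟩ := by
    intro m
    induction m with
    | zero =>
      intro hm n hn hle
      have h0 : n = 0 := by omega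
      subst h0
      exact le_rfl
    | succ m ih =>
      intro hm n hn hle
      rcases Nat.lt_or_ge n (m + 1) with h | h
      · have h1 := ih (by omega) n hn (by omega)
        have h2 := step' m (by omega)
        have h3 : ((m + 1) % κ) = m + 1 := Nat.mod_eq_of_lt hm
        calc g ⟨n, hn⟩ ≤ g ⟨m, by omega⟩ := h1
          _ ≤ g ⟨(m + 1) % κ, Nat.mod_lt _ (by omega)⟩ := h2
          _ = g ⟨m + 1, hm⟩ := congrArg g (Fin.ext h3)
      · have h0 : n = m + 1 := by omega
        subst h0
        exact le_rfl
  have last : g ⟨κ - 1, by omega⟩ ≤ g ⟨0, by omega⟩ := by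
    have h := step' (κ - 1) (by omega)
    have h3 : (κ - 1 + 1) % κ = 0 := by
      have h4 : κ - 1 + 1 = κ := by omega
      rw [h4, Nat.mod_self]
    exact le_of_le_of_eq h (congrArg g (Fin.ext h3))
  have hle : ∀ i j : Fin κ, g i ≤ g j := by
    intro i j
    have h1 : g i ≤ g ⟨κ - 1, by omega⟩ := mono (κ - 1) (by omega) i.1 i.2 (by omega)
    have h2 : g ⟨0, by omega⟩ ≤ g j := mono j.1 j.2 0 (by omega) (by omega)
    exact h1.trans (last.trans h2)
  have heq : g i = g j := le_antisymm (hle i j) (hle j i)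
  exact ⟨heq, (htight i).symm.trans (heq.trans (htight j)),
    heq.trans (htight j)⟩
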